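/- arXiv:1206.0531 — 2 statements merged into one kernel-verified Lean document; each statement's English description precedes it below -/
import Mathlib

section
/- Let p be an odd prime, q = p^n, and Π : F_q → F_q a planar function. For a,b ∈ F_q define v_{ab} ∈ ℂ^q by (v_{ab})_x = q^{-1/2} ω_p^{tr(aΠ(x)+bx)}, where ω_p = e^{2πi/p} and tr is the trace from F_q to F_p. Then for fixed a ∈ F_q, the set V_a = {v_{ab} : b ∈ F_q} is an orthonormal basis of ℂ^q. -/
/-- A function on a finite field is *planar* if every nonzero difference map is a bijection. -/
def IsPlanar {F : Type*} [Field F] (P : F → F) : Prop :=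
  ∀ a : F, a ≠ 0 → Function.Bijective (fun x => P (x + a) - P x)

/-- `ω_p^t` for `t ∈ F_p`, i.e. `e^{2πi t/p}`. -/
noncomputable def omegaPow (p : ℕ) (t : ZMod p) : ℂ :=
  Complex.exp (2 * Real.pi * Complex.I * (t.val : ℂ) / (p : ℂ))

/-- The planar-function MUB vectors `v_{ab}` in `ℂ^q`:
`(v_{ab})_x = q^{-1/2} ω_p^{tr(aΠ(x)+bx)}`. -/
noncomputable def planarVec (p : ℕ) (F : Type*) [Field F] [Fintype F]
    [Algebra (ZMod p) F] (P : F → F) (a b : F) : EuclideanSpace ℂ F :=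
  WithLp.toLp 2 fun x => (1 / Real.sqrt (Fintype.card F) : ℝ) *
    omegaPow p (Algebra.trace (ZMod p) F (a * P x + b * x))

/-- For a planar function `Π` on `F_q` (`q = p^n`, `p` an odd prime), and fixed `a`,
the family `V_a = {v_{ab} : b ∈ F_q}` is an orthonormal basis of `ℂ^q`
(an orthonormal family of `q` vectors in the `q`-dimensional space `ℂ^q`). -/
theorem planar_mub_orthonormal_basis (p n : ℕ) [Fact p.Prime] (hp : Odd p) (hn : n ≠ 0)
    (F : Type*) [Field F] [Fintype F] [Algebra (ZMod p) F]
    (hcard : Fintype.card F = p ^ n)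
    (P : F → F) (hP : IsPlanar P) (a : F) :
    Orthonormal ℂ (fun b : F => planarVec p F P a b) := by
  classical
  have hpp : p.Prime := Fact.out
  have hp0 : p ≠ 0 := hpp.ne_zero
  haveI : FiniteDimensional (ZMod p) F := Module.Finite.of_finite
  have hprim : IsPrimitiveRoot (Complex.exp (2 * Real.pi * Complex.I / p)) p :=
    Complex.isPrimitiveRoot_exp p hp0
  set ζ : ℂ := Complex.exp (2 * Real.pi * Complex.I / p) with hζdef
  have hζ : ζ ^ p = 1 := hprim.pow_eq_one
  have habsζ : ‖ζ‖ = 1 := by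
    have h1 : 2 * (Real.pi : ℂ) * Complex.I / p = ((2 * Real.pi / p : ℝ) : ℂ) * Complex.I := by
      push_cast; ring
    rw [hζdef, h1, Complex.norm_exp_ofReal_mul_I]
  set ψ : AddChar F ℂ :=
    (AddChar.zmodChar p hζ).compAddMonoidHom (Algebra.trace (ZMod p) F).toAddMonoidHom with hψdef
  have hψapp : ∀ y : F, ψ y = ζ ^ (Algebra.trace (ZMod p) F y).val := by
    intro y; simp [hψdef, AddChar.zmodChar_apply]
  have hω : ∀ y : F, omegaPow p (Algebra.trace (ZMod p) F y) = ψ y := by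
    intro y
    rw [hψapp, omegaPow, ← Complex.exp_nat_mul]
    congr 1; ring
  have habsψ : ∀ y : F, ‖ψ y‖ = 1 := by
    intro y; rw [hψapp, norm_pow, habsζ, one_pow]
  have hconj : ∀ y : F, (starRingEnd ℂ) (ψ y) = ψ (-y) := by
    intro y
    rw [AddChar.map_neg_eq_inv, Complex.inv_eq_conj (habsψ y)]
  have hψne : ψ ≠ 0 := by
    rw [AddChar.ne_zero_iff]
    obtain ⟨y, hy⟩ := Algebra.trace_surjective (ZMod p) F 1
    refine ⟨y, ?_⟩
    rw [hψapp, hy]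
    haveI : Fact (1 < p) := ⟨hpp.one_lt⟩
    rw [ZMod.val_one p, pow_one]
    exact hprim.ne_one hpp.one_lt
  have hq0 : (0:ℝ) < Fintype.card F := by positivity
  rw [orthonormal_iff_ite]
  intro b b'
  have key : ∀ x : F, (starRingEnd ℂ) (planarVec p F P a b x) * planarVec p F P a b' x
      = ((Fintype.card F : ℂ))⁻¹ * ψ ((b' - b) * x) := by
    intro x
    rw [planarVec, planarVec, PiLp.toLp_apply, PiLp.toLp_apply, hω, hω, map_mul, hconj, Complex.conj_ofReal, mul_mul_mul_comm,
      ← Complex.ofReal_mul]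
    have h2 : ψ (-(a * P x + b * x)) * ψ (a * P x + b' * x) = ψ ((b' - b) * x) := by
      rw [← AddChar.map_add_eq_mul]; congr 1; ring
    have h3 : (1 / Real.sqrt (Fintype.card F)) * (1 / Real.sqrt (Fintype.card F))
        = ((Fintype.card F : ℝ))⁻¹ := by
      rw [div_mul_div_comm, one_mul, Real.mul_self_sqrt hq0.le, one_div]
    rw [h2, h3]
    push_cast
    ring
  simp only [PiLp.inner_apply, RCLike.inner_apply', key]
  rw [← Finset.mul_sum]
  by_cases hbb : b = b'
  · subst hbb
    simp only [sub_self, zero_mul, AddChar.map_zero_eq_one, if_pos rfl]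
    rw [Finset.sum_const, Finset.card_univ, nsmul_eq_mul, mul_one,
      inv_mul_cancel₀ (Nat.cast_ne_zero.mpr Fintype.card_ne_zero)]
    simp
  · rw [if_neg hbb]
    have hc : b' - b ≠ 0 := sub_ne_zero.mpr (Ne.symm hbb)
    have hsum : ∑ x : F, ψ ((b' - b) * x) = ∑ x : F, ψ x :=
      Fintype.sum_bijective (fun x => (b' - b) * x) (mulLeft_bijective₀ _ hc) _ _ (fun x => rfl)
    rw [hsum, AddChar.sum_eq_zero_iff_ne_zero.mpr hψne, mul_zero]
end

section
/- In the Galois ring GR(4,n) = ℤ₄[x]/(h) with generalized Frobenius automorphism φ, an element α satisfies tr(α) = 0 if and only if there exists β ∈ GR(4,n) with α = β − φ(β), where tr(α) = Σ_{i=0}^{n−1} φ^i(α). -/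
set_option maxHeartbeats 1000000
set_option synthInstance.maxHeartbeats 400000

/-- Additive Hilbert 90 for the Galois ring `GR(4,n) = ℤ₄[x]/(h)`, where `h` is a monic
basic irreducible polynomial of degree `n` and `φ` is the generalized Frobenius
automorphism (the automorphism with `φ(x) ≡ x² mod 2` and `φⁿ = id`):
`tr(α) = Σ_{i<n} φⁱ(α) = 0` iff `α = β − φ(β)` for some `β`. -/
theorem galois_ring_trace_zero_iff (n : ℕ) (hn : 0 < n)
    (h : Polynomial (ZMod 4)) (hmonic : h.Monic) (hdeg : h.natDegree = n)
    (hirr : Irreducible (h.map (ZMod.castHom (by norm_num : (2 : ℕ) ∣ 4) (ZMod 2))))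
    (φ : AdjoinRoot h ≃+* AdjoinRoot h)
    (hFrob : ∀ x : AdjoinRoot h, φ x - x ^ 2 ∈ Ideal.span ({2} : Set (AdjoinRoot h)))
    (hord : ∀ x : AdjoinRoot h, (⇑φ)^[n] x = x)
    (α : AdjoinRoot h) :
    (∑ i ∈ Finset.range n, (⇑φ)^[i] α) = 0 ↔ ∃ β : AdjoinRoot h, α = β - φ β := by
  classical
  have hiter : ∀ (i : ℕ) (x y : AdjoinRoot h),
      (⇑φ)^[i] (x - y) = (⇑φ)^[i] x - (⇑φ)^[i] y := by
    intro i
    induction i with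
    | zero => intro x y; simp
    | succ i ih =>
      intro x y
      simp only [Function.iterate_succ_apply', ih, map_sub]
  constructor
  · intro h0
    -- set up the residue field
    set c2 : ZMod 4 →+* ZMod 2 := ZMod.castHom (by norm_num : (2:ℕ) ∣ 4) (ZMod 2) with hc2
    set J : Ideal (ZMod 4) := Ideal.span {2} with hJ
    set I : Ideal (AdjoinRoot h) := Ideal.span {2} with hI
    have hker : RingHom.ker c2 = J := by
      ext x
      simp only [RingHom.mem_ker, hJ, Ideal.mem_span_singleton, dvd_iff_exists_eq_mul_left]
      revert x; decide
    have hsurj : Function.Surjective c2 := by decide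
    let e0 : (ZMod 4 ⧸ J) ≃+* ZMod 2 :=
      (Ideal.quotEquivOfEq hker.symm).trans (RingHom.quotientKerEquivOfSurjective hsurj)
    have hmap : I = J.map (AdjoinRoot.of h) := by
      rw [hI, hJ, Ideal.map_span, Set.image_singleton, map_ofNat]
    let e1 : (AdjoinRoot h ⧸ I) ≃+*
        (Polynomial (ZMod 4 ⧸ J)) ⧸ (Ideal.span {h.map (Ideal.Quotient.mk J)}) :=
      (Ideal.quotEquivOfEq hmap).trans (AdjoinRoot.quotAdjoinRootEquivQuotPolynomialQuot J h)
    have hcomp : (e0 : (ZMod 4 ⧸ J) →+* ZMod 2).comp (Ideal.Quotient.mk J) = c2 :=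
      RingHom.ext_zmod _ _
    have he : Ideal.span ({h.map c2} : Set (Polynomial (ZMod 2))) =
        (Ideal.span {h.map (Ideal.Quotient.mk J)}).map
          ((Polynomial.mapEquiv e0 : Polynomial (ZMod 4 ⧸ J) ≃+* Polynomial (ZMod 2)) :
            Polynomial (ZMod 4 ⧸ J) →+* Polynomial (ZMod 2)) := by
      rw [Ideal.map_span, Set.image_singleton]
      have : (Polynomial.mapEquiv e0 : Polynomial (ZMod 4 ⧸ J) ≃+* Polynomial (ZMod 2))
          (h.map (Ideal.Quotient.mk J)) = h.map c2 := by
        simp only [Polynomial.mapEquiv_apply, Polynomial.map_map, hcomp]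
      simp only [RingEquiv.toRingHom_eq_coe, RingHom.coe_coe, this]
    let e2 := Ideal.quotientEquiv _ _ (Polynomial.mapEquiv e0) he
    set g : Polynomial (ZMod 2) := h.map c2 with hg
    let ψ : (AdjoinRoot h ⧸ I) ≃+* AdjoinRoot g := e1.trans e2
    haveI : Fact (Irreducible g) := ⟨hirr⟩
    have hgmonic : g.Monic := hmonic.map c2
    have hgdeg : g.natDegree = n := by rw [hg, hmonic.natDegree_map, hdeg]
    -- 2 * 2 = 0 in the Galois ring
    have h4 : (2 : AdjoinRoot h) * 2 = 0 := by
      have : ((2 : ZMod 4) * 2 : ZMod 4) = 0 := by decide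
      calc (2 : AdjoinRoot h) * 2
          = algebraMap (ZMod 4) (AdjoinRoot h) ((2 : ZMod 4) * 2) := by
            rw [map_mul, map_ofNat]
        _ = 0 := by rw [this, map_zero]
    -- units: anything nonzero mod I is a unit
    have hunit : ∀ u : AdjoinRoot h, Ideal.Quotient.mk I u ≠ 0 → IsUnit u := by
      intro u hu
      have hψu : ψ (Ideal.Quotient.mk I u) ≠ 0 :=
        fun hc => hu (ψ.injective (by rw [hc, map_zero]))
      obtain ⟨w, hw⟩ : ∃ w : AdjoinRoot h,
          ψ (Ideal.Quotient.mk I w) = (ψ (Ideal.Quotient.mk I u))⁻¹ := by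
        obtain ⟨q, hq⟩ := ψ.surjective (ψ (Ideal.Quotient.mk I u))⁻¹
        obtain ⟨w, hw⟩ := Ideal.Quotient.mk_surjective (I := I) q
        exact ⟨w, by rw [hw, hq]⟩
      have h1 : Ideal.Quotient.mk I (u * w) = Ideal.Quotient.mk I 1 := by
        apply ψ.injective
        rw [map_mul, map_mul, hw, mul_inv_cancel₀ hψu, map_one, map_one]
      have h2 : u * w - 1 ∈ I := (Ideal.Quotient.mk_eq_mk_iff_sub_mem _ _).mp h1
      obtain ⟨r, hr⟩ := Ideal.mem_span_singleton.mp (hI ▸ h2)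
      have huw : u * w = 1 + 2 * r := by linear_combination hr
      refine IsUnit.of_mul_eq_one (a := u) (w * (1 - 2 * r)) ?_
      calc u * (w * (1 - 2 * r)) = (u * w) * (1 - 2 * r) := by ring
        _ = (1 + 2 * r) * (1 - 2 * r) := by rw [huw]
        _ = 1 - (2 * 2) * (r * r) := by ring
        _ = 1 := by rw [h4]; ring
    -- key: reduction of φ-iterates mod I
    have hmkpow : ∀ (i : ℕ) (x : AdjoinRoot h),
        Ideal.Quotient.mk I ((⇑φ)^[i] x) = (Ideal.Quotient.mk I x) ^ (2 ^ i) := by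
      intro i
      induction i with
      | zero => intro x; simp
      | succ i ih =>
        intro x
        rw [Function.iterate_succ_apply']
        have : Ideal.Quotient.mk I (φ ((⇑φ)^[i] x)) =
            Ideal.Quotient.mk I (((⇑φ)^[i] x) ^ 2) :=
          (Ideal.Quotient.mk_eq_mk_iff_sub_mem _ _).mpr (hFrob _)
        rw [this, map_pow, ih, ← pow_mul, pow_succ]
    -- existence of an element with unit trace
    obtain ⟨θ, hθ⟩ : ∃ θ : AdjoinRoot h,
        IsUnit (∑ i ∈ Finset.range n, (⇑φ)^[i] θ) := by
      by_contra hcon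
      push_neg at hcon
      have habs : ∀ y : AdjoinRoot g, ∑ i ∈ Finset.range n, y ^ (2^i) = 0 := by
        intro y
        obtain ⟨q, hq⟩ := ψ.surjective y
        obtain ⟨θ, hθ⟩ := Ideal.Quotient.mk_surjective (I := I) q
        have hmk0 : Ideal.Quotient.mk I (∑ i ∈ Finset.range n, (⇑φ)^[i] θ) = 0 := by
          by_contra hne
          exact hcon θ (hunit _ hne)
        calc ∑ i ∈ Finset.range n, y ^ (2^i)
            = ψ (Ideal.Quotient.mk I (∑ i ∈ Finset.range n, (⇑φ)^[i] θ)) := by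
              rw [map_sum, map_sum]
              refine Finset.sum_congr rfl fun i _ => ?_
              rw [hmkpow, map_pow, hθ, hq]
          _ = 0 := by rw [hmk0, map_zero]
      -- finite field contradiction
      let pb : PowerBasis (ZMod 2) (AdjoinRoot g) := AdjoinRoot.powerBasis' hgmonic
      have hdim : pb.dim = n := by simp [pb, hgdeg]
      let eqv : AdjoinRoot g ≃ (Fin pb.dim → ZMod 2) := pb.basis.equivFun.toEquiv
      haveI : Fintype (AdjoinRoot g) := Fintype.ofEquiv _ eqv.symm
      have hcard : Fintype.card (AdjoinRoot g) = 2 ^ n := by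
        rw [Fintype.card_congr eqv, Fintype.card_fun, ZMod.card, Fintype.card_fin, hdim]
      set P : Polynomial (AdjoinRoot g) := ∑ i ∈ Finset.range n, Polynomial.X ^ (2^i) with hP
      have hPdeg : P.natDegree ≤ 2 ^ (n-1) := by
        apply Polynomial.natDegree_sum_le_of_forall_le
        intro i hi
        rw [Polynomial.natDegree_X_pow]
        have hi' : i ≤ n - 1 := by have := Finset.mem_range.mp hi; omega
        exact Nat.pow_le_pow_right (by norm_num) hi'
      have hPeval : ∀ y : AdjoinRoot g, P.eval y = 0 := by
        intro y
        simp only [hP, Polynomial.eval_finset_sum, Polynomial.eval_pow, Polynomial.eval_X]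
        exact habs y
      have hP0 : P = 0 := by
        apply Polynomial.eq_zero_of_natDegree_lt_card_of_eval_eq_zero P Function.injective_id
          (fun y => hPeval y)
        calc P.natDegree ≤ 2 ^ (n-1) := hPdeg
          _ < 2 ^ n := Nat.pow_lt_pow_right (by norm_num) (by omega)
          _ = Fintype.card (AdjoinRoot g) := hcard.symm
      have hc : P.coeff (2 ^ (n-1)) = 1 := by
        simp only [hP, Polynomial.finset_sum_coeff, Polynomial.coeff_X_pow]
        rw [Finset.sum_eq_single (n-1)]
        · simp
        · intro j hj hne
          have : ¬ (2 ^ (n-1) = 2 ^ j) := fun hEq =>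
            hne (Nat.pow_right_injective (le_refl 2) hEq.symm)
          simp [if_neg, this]
        · intro hmem; exact absurd (Finset.mem_range.mpr (by omega)) hmem
      rw [hP0] at hc
      simp at hc
    -- the trace of θ is φ-fixed
    obtain ⟨u, hu⟩ := hθ
    have hshift : ∀ x : AdjoinRoot h,
        φ (∑ i ∈ Finset.range n, (⇑φ)^[i] x) = ∑ i ∈ Finset.range n, (⇑φ)^[i] x := by
      intro x
      rw [map_sum]
      have h1 : ∀ i, φ ((⇑φ)^[i] x) = (⇑φ)^[i+1] x := fun i =>
        (Function.iterate_succ_apply' φ i x).symm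
      calc ∑ i ∈ Finset.range n, φ ((⇑φ)^[i] x)
          = ∑ i ∈ Finset.range n, (⇑φ)^[i+1] x :=
            Finset.sum_congr rfl fun i _ => h1 i
        _ = ∑ i ∈ Finset.range (n+1), (⇑φ)^[i] x - (⇑φ)^[0] x := by
            rw [Finset.sum_range_succ']; ring
        _ = ∑ i ∈ Finset.range n, (⇑φ)^[i] x := by
            rw [Finset.sum_range_succ, hord x]; simp
    have hcfix : φ (u : AdjoinRoot h) = u := by rw [hu]; exact hshift θ
    have hufix : φ ((u⁻¹ : (AdjoinRoot h)ˣ) : AdjoinRoot h) = ((u⁻¹ : (AdjoinRoot h)ˣ) : AdjoinRoot h) := by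
      have h1 : φ ((u⁻¹ : (AdjoinRoot h)ˣ) : AdjoinRoot h) * (u : AdjoinRoot h) = 1 := by
        rw [← hcfix, ← map_mul]
        simp
      calc φ ((u⁻¹ : (AdjoinRoot h)ˣ) : AdjoinRoot h)
          = φ ((u⁻¹ : (AdjoinRoot h)ˣ) : AdjoinRoot h) * ((u : AdjoinRoot h) * ((u⁻¹ : (AdjoinRoot h)ˣ) : AdjoinRoot h)) := by
            simp [Units.mul_inv]
        _ = (φ ((u⁻¹ : (AdjoinRoot h)ˣ) : AdjoinRoot h) * (u : AdjoinRoot h)) * ((u⁻¹ : (AdjoinRoot h)ˣ) : AdjoinRoot h) := by ring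
        _ = ((u⁻¹ : (AdjoinRoot h)ˣ) : AdjoinRoot h) := by rw [h1, one_mul]
    -- the partial sums
    set a : ℕ → AdjoinRoot h := fun i => ∑ j ∈ Finset.range (i+1), (⇑φ)^[j] α with haDef
    have ha0 : a 0 = α := by simp [haDef]
    have han : a n = α := by
      rw [haDef]
      simp only []
      rw [Finset.sum_range_succ, h0, hord α, zero_add]
    have hφa : ∀ i, φ (a i) = a (i+1) - α := by
      intro i
      have hs := Finset.sum_range_succ' (fun j => (⇑φ)^[j] α) (i+1)
      have h2 : φ (a i) = ∑ j ∈ Finset.range (i+1), (⇑φ)^[j+1] α := by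
        rw [haDef]
        simp only []
        rw [map_sum]
        exact Finset.sum_congr rfl fun j _ => (Function.iterate_succ_apply' φ j α).symm
      rw [h2, haDef]
      simp only [] at hs ⊢
      rw [show (⇑φ)^[0] α = α from rfl] at hs
      linear_combination -hs
    -- the element β
    set β : AdjoinRoot h := ((u⁻¹ : (AdjoinRoot h)ˣ) : AdjoinRoot h) *
      ∑ i ∈ Finset.range n, a i * (⇑φ)^[i] θ with hβ
    refine ⟨β, ?_⟩
    have hφβ : φ β = ((u⁻¹ : (AdjoinRoot h)ˣ) : AdjoinRoot h) *
        ∑ i ∈ Finset.range n, (a (i+1) - α) * (⇑φ)^[i+1] θ := by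
      rw [hβ, map_mul, hufix, map_sum]
      congr 1
      refine Finset.sum_congr rfl fun i _ => ?_
      rw [map_mul, hφa i, Function.iterate_succ_apply' φ i θ]
    have hsum2 : ∑ i ∈ Finset.range n, (a (i+1) - α) * (⇑φ)^[i+1] θ
        = ∑ i ∈ Finset.range n, (a i - α) * (⇑φ)^[i] θ := by
      have := Finset.sum_range_succ' (fun i => (a i - α) * (⇑φ)^[i] θ) n
      -- this : ∑_{i<n+1} f i = ∑_{i<n} f (i+1) + f 0
      have h2 : ∑ i ∈ Finset.range (n+1), (a i - α) * (⇑φ)^[i] θ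
          = ∑ i ∈ Finset.range n, (a i - α) * (⇑φ)^[i] θ + (a n - α) * (⇑φ)^[n] θ :=
        Finset.sum_range_succ _ n
      rw [h2, han, sub_self, zero_mul, add_zero] at this
      rw [ha0] at this
      simpa using this.symm
    have hsum3 : ∑ i ∈ Finset.range n, (a i - α) * (⇑φ)^[i] θ
        = (∑ i ∈ Finset.range n, a i * (⇑φ)^[i] θ) - α * (u : AdjoinRoot h) := by
      rw [hu, Finset.mul_sum, ← Finset.sum_sub_distrib]
      exact Finset.sum_congr rfl fun i _ => by ring
    rw [hφβ, hsum2, hsum3, hβ]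
    have huu : ((u⁻¹ : (AdjoinRoot h)ˣ) : AdjoinRoot h) * (u : AdjoinRoot h) = 1 := by
      simp [Units.inv_mul]
    calc α = (((u⁻¹ : (AdjoinRoot h)ˣ) : AdjoinRoot h) * (u : AdjoinRoot h)) * α := by
          rw [huu, one_mul]
      _ = ((u⁻¹ : (AdjoinRoot h)ˣ) : AdjoinRoot h) * (∑ i ∈ Finset.range n, a i * (⇑φ)^[i] θ) -
          ((u⁻¹ : (AdjoinRoot h)ˣ) : AdjoinRoot h) *
            ((∑ i ∈ Finset.range n, a i * (⇑φ)^[i] θ) - α * (u : AdjoinRoot h)) := by ring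
  · rintro ⟨β, rfl⟩
    have : ∀ i ∈ Finset.range n, (⇑φ)^[i] (β - φ β) = (⇑φ)^[i] β - (⇑φ)^[i+1] β := by
      intro i _
      rw [hiter, Function.iterate_succ_apply]
    rw [Finset.sum_congr rfl this, Finset.sum_range_sub']
    rw [show (⇑φ)^[0] β = β from rfl, hord β, sub_self]
end
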